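/- For all sets X, Y ⊆ ℕ, all n ≥ 1 and all s ≥ 0, the number P_{n,s}^{X,Y} of permutations of {1,…,n} with exactly s X,Y-descents satisfies P_{n,s}^{X,Y} = |X_n^c|! · Σ_{r=0}^{s} (-1)^{s-r} · C(|X_n^c|+r, r) · C(n+1, s-r) · Π_{x ∈ X_n} (1 + r + α_{X,n,x} + β_{Y,n,x}). -/

import Mathlib

open scoped Classical
open Finset

/-- Number of `X,Y`-descents of the word `w = w_1 ⋯ w_n` (indices `i` with
`w_i > w_{i+1}`, `w_i ∈ X`, `w_{i+1} ∈ Y`). -/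
noncomputable def desXY (X Y : Set ℕ) {n : ℕ} (w : Fin n → ℕ) : ℕ :=
  (Finset.univ.filter (fun i : Fin n =>
    ∃ h : i.1 + 1 < n, w i > w ⟨i.1 + 1, h⟩ ∧ w i ∈ X ∧ w ⟨i.1 + 1, h⟩ ∈ Y)).card

/-- `permCount X Y n s` is the number of permutations `σ` of `{1,…,n}` with
exactly `s` `X,Y`-descents. -/
noncomputable def permCount (X Y : Set ℕ) (n s : ℕ) : ℕ :=
  (Finset.univ.filter (fun σ : Equiv.Perm (Fin n) =>
    desXY X Y (fun i => (σ i : ℕ) + 1) = s)).card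

/-- `α_{S,n,j} = |{x : j < x ≤ n, x ∉ S}|`. -/
noncomputable def alphaSet (S : Set ℕ) (n j : ℕ) : ℕ :=
  ((Finset.Ioc j n).filter (fun x => x ∉ S)).card

/-- `β_{S,n,j} = |{x : 1 ≤ x < j, x ∉ S}|`. -/
noncomputable def betaSet (S : Set ℕ) (j : ℕ) : ℕ :=
  ((Finset.Ico 1 j).filter (fun x => x ∉ S)).card


noncomputable def ind (X Y : Set ℕ) (a b : ℕ) : ℕ := if a > b ∧ a ∈ X ∧ b ∈ Y then 1 else 0

noncomputable def ldes (X Y : Set ℕ) : List ℕ → ℕ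
  | [] => 0
  | [_] => 0
  | a :: b :: t => ind X Y a b + ldes X Y (b :: t)

lemma ldes_cons (X Y : Set ℕ) (a : ℕ) (l : List ℕ) :
    ldes X Y (a :: l) = (if h : l ≠ [] then ind X Y a (l.head h) else 0) + ldes X Y l := by
  cases l with
  | nil => simp [ldes]
  | cons b t => simp [ldes]

lemma desXY_eq_sum (X Y : Set ℕ) {n : ℕ} (w : Fin n → ℕ) :
    desXY X Y w = ∑ i : Fin n,
      if h : i.1 + 1 < n then ind X Y (w i) (w ⟨i.1+1, h⟩) else 0 := by
  rw [desXY, Finset.card_filter]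
  refine Finset.sum_congr rfl fun i _ => ?_
  by_cases h : i.1 + 1 < n
  · rw [dif_pos h]
    unfold ind
    exact if_congr ⟨fun ⟨h', hc⟩ => hc, fun hc => ⟨h, hc⟩⟩ rfl rfl
  · rw [dif_neg h, if_neg]
    rintro ⟨h', _⟩; exact h h'

lemma desXY_eq_ldes (X Y : Set ℕ) {n : ℕ} (w : Fin n → ℕ) :
    desXY X Y w = ldes X Y (List.ofFn w) := by
  induction n with
  | zero => simp [desXY, ldes]
  | succ n ih =>
    rw [desXY_eq_sum, Fin.sum_univ_succ, List.ofFn_succ, ldes_cons]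
    have htail : ∑ j : Fin n,
        (if h : (Fin.succ j).1 + 1 < n + 1 then ind X Y (w (Fin.succ j)) (w ⟨(Fin.succ j).1+1, h⟩) else 0)
        = ldes X Y (List.ofFn (fun i => w (Fin.succ i))) := by
      rw [← ih (fun i => w (Fin.succ i)), desXY_eq_sum]
      refine Finset.sum_congr rfl fun j _ => ?_
      by_cases h : j.1 + 1 < n
      · rw [dif_pos (by simpa using Nat.succ_lt_succ h), dif_pos h]
        have : (⟨(Fin.succ j).1 + 1, by simpa using Nat.succ_lt_succ h⟩ : Fin (n+1))
            = Fin.succ ⟨j.1+1, h⟩ := by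
          ext; simp [Fin.succ]
        rw [this]
      · rw [dif_neg (by simpa using fun hh => h (Nat.lt_of_succ_lt_succ hh)), dif_neg h]
    rw [htail]
    congr 1
    by_cases hn : n = 0
    · subst hn
      rw [dif_neg (by simp), dif_neg (by simp)]
    · have hpos : 0 < n := Nat.pos_of_ne_zero hn
      have hne : (List.ofFn (fun i : Fin n => w (Fin.succ i))) ≠ [] := by
        simp [List.ofFn_eq_nil_iff, hn]
      rw [dif_pos hne, dif_pos (by simpa using hpos : (0:Fin (n+1)).1 + 1 < n+1)]
      rw [List.head_ofFn]
      exact congrArg (fun z => ind X Y (w 0) (w z)) (Fin.ext (by simp))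

noncomputable def ddef (X Y : Set ℕ) (l : List ℕ) (k : ℕ) : ℕ :=
  if 0 < k ∧ k < l.length then ind X Y (l.getD (k-1) 0) (l.getD k 0) else 0

noncomputable def edef (X Y : Set ℕ) (M : ℕ) (l : List ℕ) (k : ℕ) : ℕ :=
  if k < l.length then ind X Y M (l.getD k 0) else 0

lemma head_eq_getD (l : List ℕ) (h : l ≠ []) : l.head h = l.getD 0 0 := by
  cases l with
  | nil => exact absurd rfl h
  | cons a t => rfl

lemma ldes_insertIdx (X Y : Set ℕ) (M : ℕ) :
    ∀ (k : ℕ) (l : List ℕ), k ≤ l.length → (∀ z ∈ l, z < M) →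
    ldes X Y (l.insertIdx k M) + ddef X Y l k = ldes X Y l + edef X Y M l k := by
  intro k
  induction k with
  | zero =>
    intro l _ _
    rw [List.insertIdx_zero, ldes_cons]
    have hd : ddef X Y l 0 = 0 := by simp [ddef]
    rw [hd]
    cases l with
    | nil => simp [edef]
    | cons a t =>
      rw [edef, if_pos (by simp)]
      rw [dif_pos (by simp : (a :: t) ≠ [])]
      simp only [List.head_cons, List.getD_cons_zero]
      omega
  | succ k ih =>
    intro l hk hlt
    cases l with
    | nil => simp at hk
    | cons a t =>
      simp only [List.length_cons] at hk
      have hk' : k ≤ t.length := Nat.le_of_succ_le_succ hk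
      rw [List.insertIdx_succ_cons, ldes_cons, ldes_cons X Y a t]
      cases k with
      | zero =>
        -- insert M at front of t
        rw [List.insertIdx_zero, ldes_cons]
        have hd : ddef X Y (a :: t) 1 =
            (if h : t ≠ [] then ind X Y a (t.head h) else 0) := by
          cases t with
          | nil => simp [ddef]
          | cons b t' =>
            rw [ddef, if_pos (by simp)]
            rw [dif_pos (by simp : (b :: t') ≠ [])]
            simp
        have he : edef X Y M (a :: t) 1 =
            (if h : t ≠ [] then ind X Y M (t.head h) else 0) := by
          cases t with
          | nil => simp [edef]
          | cons b t' =>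
            rw [edef, if_pos (by simp)]
            rw [dif_pos (by simp : (b :: t') ≠ [])]
            simp
        rw [hd, he]
        have hMt : (if h : t ≠ [] then ind X Y M (t.head h) else 0)
            = (if h : (M :: t) ≠ [] then ind X Y M ((M::t).head (by simp)) else 0) →
            True := fun _ => trivial
        clear hMt
        have haM : (if h : (M :: t) ≠ [] then ind X Y a ((M :: t).head h) else 0) = 0 := by
          rw [dif_pos (by simp)]
          simp only [List.head_cons, ind]
          apply if_neg
          rintro ⟨hgt, -⟩
          exact absurd hgt (by simp [Nat.not_lt.mpr (le_of_lt (hlt a (by simp)))])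
        rw [haM]
        cases t with
        | nil => simp [edef]
        | cons b t' =>
          rw [dif_pos (by simp : (b :: t') ≠ []), dif_pos (by simp : (b :: t') ≠ [])]
          simp only [List.head_cons]
          omega
      | succ k' =>
        -- k'+1 ≥ 1; t nonempty
        cases t with
        | nil => simp at hk'
        | cons b t' =>
          have hne1 : ((b :: t').insertIdx (k'+1) M) ≠ [] := by
            rw [List.insertIdx_succ_cons]; simp
          rw [dif_pos hne1, dif_pos (by simp : (b :: t') ≠ [])]
          have hhead : ((b :: t').insertIdx (k'+1) M).head hne1 = b := by
            simp only [List.insertIdx_succ_cons, List.head_cons]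
          rw [hhead]
          simp only [List.head_cons]
          have hdd : ddef X Y (a :: b :: t') (k'+1+1) = ddef X Y (b :: t') (k'+1) := by
            unfold ddef
            simp only [List.length_cons, List.getD_cons_succ]
            exact if_congr (by omega) rfl rfl
          have hee : edef X Y M (a :: b :: t') (k'+1+1) = edef X Y M (b :: t') (k'+1) := by
            unfold edef
            simp only [List.length_cons, List.getD_cons_succ]
            exact if_congr (by omega) rfl rfl
          rw [hdd, hee]
          have hrec := ih (b :: t') hk' (fun z hz => hlt z (List.mem_cons_of_mem a hz))
          omega


noncomputable def insPerm {n : ℕ} (σ : Equiv.Perm (Fin n)) (p : Fin (n+1)) :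
    Equiv.Perm (Fin (n+1)) :=
  (finSuccEquiv' p).trans ((Equiv.optionCongr σ).trans (finSuccEquiv' (Fin.last n)).symm)

lemma insPerm_apply_same {n : ℕ} (σ : Equiv.Perm (Fin n)) (p : Fin (n+1)) :
    insPerm σ p p = Fin.last n := by
  simp [insPerm, finSuccEquiv'_at, finSuccEquiv'_symm_none]

lemma insPerm_apply_succAbove {n : ℕ} (σ : Equiv.Perm (Fin n)) (p : Fin (n+1)) (j : Fin n) :
    insPerm σ p (p.succAbove j) = (σ j).castSucc := by
  simp only [insPerm, Equiv.trans_apply, finSuccEquiv'_succAbove, Equiv.optionCongr_apply,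
    Option.map_some, finSuccEquiv'_symm_some]
  rw [Fin.succAbove_last]

lemma insPerm_word {n : ℕ} (σ : Equiv.Perm (Fin n)) (p : Fin (n+1)) :
    (fun i => ((insPerm σ p i : Fin (n+1)) : ℕ) + 1)
      = p.insertNth (n+1) (fun j => ((σ j : Fin n) : ℕ) + 1) := by
  funext i
  refine Fin.succAboveCases
    (α := fun jj => ((insPerm σ p jj : Fin (n+1)) : ℕ) + 1
      = Fin.insertNth (α := fun _ => ℕ) p (n+1) (fun t => ((σ t : Fin n) : ℕ) + 1) jj) p ?_ ?_ i
  · simp only [Fin.insertNth_apply_same, insPerm_apply_same, Fin.val_last]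
  · intro j
    simp only [Fin.insertNth_apply_succAbove, insPerm_apply_succAbove, Fin.coe_castSucc]

lemma ofFn_insertNth {α : Type*} {n : ℕ} (p : Fin (n+1)) (a : α) (f : Fin n → α) :
    List.ofFn (p.insertNth a f) = (List.ofFn f).insertIdx p.1 a := by
  have hlen : ((List.ofFn f).insertIdx p.1 a).length = n + 1 := by
    rw [List.length_insertIdx, if_pos (by simp [Fin.is_le p])]
    simp
  apply List.ext_getElem
  · simp [hlen]
  · intro i h1 h2
    rcases lt_trichotomy i p.1 with hlt | heq | hgt
    · have hi : i < n := by have := p.2; omega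
      rw [List.getElem_insertIdx_of_lt hlt]
      rw [List.getElem_ofFn, List.getElem_ofFn]
      have he : (⟨i, by omega⟩ : Fin (n+1)) = p.succAbove ⟨i, hi⟩ := by
        rw [Fin.succAbove_of_castSucc_lt]
        · rfl
        · simpa [Fin.lt_def] using hlt
      rw [he, Fin.insertNth_apply_succAbove]
    · subst heq
      rw [List.getElem_insertIdx_self]
      rw [List.getElem_ofFn]
      have he : (⟨p.1, by omega⟩ : Fin (n+1)) = p := Fin.ext rfl
      rw [he, Fin.insertNth_apply_same]
    · obtain ⟨k, hk⟩ : ∃ k, i = p.1 + k + 1 := ⟨i - p.1 - 1, by omega⟩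
      subst hk
      have hik : p.1 + k < n := by simp at h1; omega
      rw [List.getElem_insertIdx_add_succ _ _ _ _ (by simpa using hik)]
      rw [List.getElem_ofFn, List.getElem_ofFn]
      have he : (⟨p.1 + k + 1, by omega⟩ : Fin (n+1)) = p.succAbove ⟨p.1 + k, hik⟩ := by
        rw [Fin.succAbove_of_le_castSucc]
        · rfl
        · simp [Fin.le_def]
      rw [he, Fin.insertNth_apply_succAbove]


noncomputable def lY (Y : Set ℕ) (n : ℕ) : ℕ :=
  ((Finset.Icc 1 n).filter (fun v => v ∈ Y)).card

lemma insPerm_injective {n : ℕ} :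
    Function.Injective (fun x : Equiv.Perm (Fin n) × Fin (n+1) => insPerm x.1 x.2) := by
  rintro ⟨σ, p⟩ ⟨τ, q⟩ h
  simp only at h
  have hp : insPerm τ q p = Fin.last n := by rw [← h, insPerm_apply_same]
  have hpq : p = q := (insPerm τ q).injective (hp.trans (insPerm_apply_same τ q).symm)
  subst hpq
  have hστ : σ = τ := by
    ext j
    have h2 : insPerm σ p (p.succAbove j) = insPerm τ p (p.succAbove j) := by rw [h]
    rw [insPerm_apply_succAbove, insPerm_apply_succAbove] at h2
    exact congrArg Fin.val (Fin.castSucc_injective n h2)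
  rw [hστ]

lemma permCount_succ (X Y : Set ℕ) (n s : ℕ) :
    permCount X Y (n+1) s = ∑ σ' : Equiv.Perm (Fin n),
      ((Finset.univ.filter (fun p : Fin (n+1) =>
        desXY X Y (fun i => ((insPerm σ' p i : Fin (n+1)) : ℕ) + 1) = s)).card) := by
  have hbij : Function.Bijective
      (fun x : Equiv.Perm (Fin n) × Fin (n+1) => insPerm x.1 x.2) := by
    rw [Fintype.bijective_iff_injective_and_card]
    refine ⟨insPerm_injective, ?_⟩
    simp [Fintype.card_perm, Nat.factorial_succ, Nat.mul_comm]
  have key : (Finset.univ.filter (fun x : Equiv.Perm (Fin n) × Fin (n+1) =>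
      desXY X Y (fun i => ((insPerm x.1 x.2 i : Fin (n+1)) : ℕ) + 1) = s)).card
      = (Finset.univ.filter (fun σ : Equiv.Perm (Fin (n+1)) =>
        desXY X Y (fun i => (σ i : ℕ) + 1) = s)).card :=
    Finset.card_equiv (Equiv.ofBijective _ hbij) (fun x => by simp [Equiv.ofBijective])
  rw [permCount, ← key, Finset.card_filter, Fintype.sum_prod_type]
  exact Finset.sum_congr rfl fun σ' _ => (Finset.card_filter _ _).symm

lemma ind_le_one (X Y : Set ℕ) (a b : ℕ) : ind X Y a b ≤ 1 := by
  unfold ind; split <;> simp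

lemma cnt_formula (X Y : Set ℕ) {n : ℕ} (σ' : Equiv.Perm (Fin n)) (s s' : ℕ)
    (hs' : desXY X Y (fun i => ((σ' i : Fin n) : ℕ) + 1) = s') :
    ((Finset.univ.filter (fun p : Fin (n+1) =>
        desXY X Y (fun i => ((insPerm σ' p i : Fin (n+1)) : ℕ) + 1) = s)).card
      = if (n+1) ∈ X then
          ((if s = s'+1 then lY Y n - s' else 0) + (if s = s' then (n+1) - (lY Y n - s') else 0))
        else ((if s + 1 = s' then s' else 0) + (if s = s' then (n+1) - s' else 0)))
    ∧ ((n+1) ∈ X → s' ≤ lY Y n) := by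
  set w' : Fin n → ℕ := fun i => ((σ' i : Fin n) : ℕ) + 1 with hw'
  set l : List ℕ := List.ofFn w' with hl
  have hlen : l.length = n := by simp [hl]
  have hwb : ∀ i : Fin n, w' i ∈ Finset.Icc 1 n := by
    intro i
    simp only [hw', Finset.mem_Icc]
    exact ⟨Nat.le_add_left 1 _, Nat.succ_le_of_lt (σ' i).2⟩
  have hget : ∀ (i : ℕ) (h : i < n), l.getD i 0 = w' ⟨i, h⟩ := by
    intro i h
    rw [List.getD_eq_getElem _ _ (by rw [hlen]; exact h)]
    simp [hl]
  have hlt : ∀ z ∈ l, z < n + 1 := by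
    intro z hz
    rw [hl, List.mem_ofFn] at hz
    obtain ⟨j, rfl⟩ := hz
    have := (Finset.mem_Icc.mp (hwb j)).2
    omega
  have hkey : ∀ p : Fin (n+1),
      desXY X Y (fun i => ((insPerm σ' p i : Fin (n+1)) : ℕ) + 1) + ddef X Y l p.1
        = s' + edef X Y (n+1) l p.1 := by
    intro p
    rw [desXY_eq_ldes, insPerm_word, ofFn_insertNth, ← hs', desXY_eq_ldes]
    exact ldes_insertIdx X Y (n+1) p.1 l (by rw [hlen]; exact Nat.lt_succ_iff.mp p.2) hlt
  have hd1 : ∀ k, ddef X Y l k ≤ 1 := by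
    intro k; unfold ddef; split
    · exact ind_le_one X Y _ _
    · exact Nat.zero_le 1
  have he1 : ∀ k, edef X Y (n+1) l k ≤ 1 := by
    intro k; unfold edef; split
    · exact ind_le_one X Y _ _
    · exact Nat.zero_le 1
  have hSd : ∑ p : Fin (n+1), ddef X Y l p.1 = s' := by
    rw [← hs', desXY_eq_sum, Fin.sum_univ_succ]
    have h0 : ddef X Y l ((0 : Fin (n+1)).1) = 0 := by simp [ddef]
    rw [h0, zero_add]
    refine Finset.sum_congr rfl fun j _ => ?_
    have hj1 : (Fin.succ j).1 = j.1 + 1 := rfl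
    rw [hj1]
    by_cases h : j.1 + 1 < n
    · rw [ddef, if_pos ⟨Nat.succ_pos _, by rw [hlen]; exact h⟩, dif_pos h]
      have e1 : l.getD (j.1 + 1 - 1) 0 = w' j := by
        rw [Nat.add_sub_cancel, hget j.1 (lt_trans (Nat.lt_succ_self _) h)]
      have e2 : l.getD (j.1+1) 0 = w' ⟨j.1+1, h⟩ := hget _ h
      rw [e1, e2]
    · rw [ddef, if_neg (by rw [hlen]; exact fun hc => h hc.2), dif_neg h]
  have hSe : ∑ p : Fin (n+1), edef X Y (n+1) l p.1
      = if (n+1) ∈ X then lY Y n else 0 := by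
    rw [Fin.sum_univ_castSucc]
    have hlast : edef X Y (n+1) l ((Fin.last n).1) = 0 := by
      rw [edef, if_neg]; rw [hlen]; simp
    rw [hlast, add_zero]
    have hcs : ∀ j : Fin n, edef X Y (n+1) l ((Fin.castSucc j).1)
        = ind X Y (n+1) (w' j) := by
      intro j
      have hcc : (Fin.castSucc j).1 = j.1 := rfl
      rw [hcc, edef, if_pos (by rw [hlen]; exact j.2)]
      rw [hget j.1 j.2]
    rw [Finset.sum_congr rfl (fun j _ => hcs j)]
    by_cases hX : (n+1) ∈ X
    · rw [if_pos hX]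
      have : ∀ j : Fin n, ind X Y (n+1) (w' j) = if w' j ∈ Y then 1 else 0 := by
        intro j
        unfold ind
        by_cases hy : w' j ∈ Y
        · rw [if_pos hy, if_pos]
          refine ⟨?_, hX, hy⟩
          have := (Finset.mem_Icc.mp (hwb j)).2
          omega
        · rw [if_neg hy, if_neg (by tauto)]
      rw [Finset.sum_congr rfl (fun j _ => this j), ← Finset.card_filter]
      rw [lY]
      apply Finset.card_bij (fun j _ => w' j)
      · intro j hj
        simp only [Finset.mem_filter] at hj ⊢
        exact ⟨hwb j, hj.2⟩
      · intro a ha b hb hab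
        simp only [hw'] at hab
        have : σ' a = σ' b := Fin.ext (by omega)
        exact σ'.injective this
      · intro v hv
        simp only [Finset.mem_filter, Finset.mem_Icc] at hv
        refine ⟨σ'.symm ⟨v - 1, by omega⟩, ?_, ?_⟩
        · simp only [Finset.mem_filter, Finset.mem_univ, true_and, hw']
          rw [Equiv.apply_symm_apply]
          have hv1 : (⟨v - 1, by omega⟩ : Fin n).1 + 1 = v := by
            simp only [Fin.val_mk]; omega
          rw [hv1]
          exact hv.2
        · simp only [hw']
          rw [Equiv.apply_symm_apply]
          simp only [Fin.val_mk]
          omega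
    · rw [if_neg hX]
      refine Finset.sum_eq_zero fun j _ => ?_
      unfold ind
      rw [if_neg (by tauto)]
  have hde : (n+1) ∈ X → ∀ k, ddef X Y l k ≤ edef X Y (n+1) l k := by
    intro hX k
    unfold ddef
    split
    · next hc =>
      rw [edef, if_pos hc.2]
      unfold ind
      split
      · next hdd =>
        rw [if_pos]
        have hkn : k < n := by rw [hlen] at hc; exact hc.2
        refine ⟨?_, hX, hdd.2.2⟩
        rw [hget k hkn]
        have := (Finset.mem_Icc.mp (hwb ⟨k, hkn⟩)).2
        omega
      · exact Nat.zero_le _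
    · exact Nat.zero_le _
  have hs'le : (n+1) ∈ X → s' ≤ lY Y n := by
    intro hX
    rw [← hSd]
    calc ∑ p : Fin (n+1), ddef X Y l p.1 ≤ ∑ p : Fin (n+1), edef X Y (n+1) l p.1 :=
          Finset.sum_le_sum fun p _ => hde hX p.1
      _ = lY Y n := by rw [hSe, if_pos hX]
  refine ⟨?_, hs'le⟩
  rw [Finset.card_filter]
  by_cases hX : (n+1) ∈ X
  · rw [if_pos hX]
    have hpt : ∀ p : Fin (n+1),
        (if desXY X Y (fun i => ((insPerm σ' p i : Fin (n+1)) : ℕ) + 1) = s then 1 else 0)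
        = (if s = s'+1 then edef X Y (n+1) l p.1 - ddef X Y l p.1 else 0)
          + (if s = s' then 1 - (edef X Y (n+1) l p.1 - ddef X Y l p.1) else 0) := by
      intro p
      have h1 := hkey p
      have h2 := hd1 p.1
      have h3 := he1 p.1
      have h4 := hde hX p.1
      split_ifs <;> omega
    rw [Finset.sum_congr rfl (fun p _ => hpt p), Finset.sum_add_distrib]
    congr 1
    · by_cases h1 : s = s' + 1
      · simp only [if_pos h1]
        rw [Finset.sum_tsub_distrib _ (fun p _ => hde hX p.1), hSd, hSe, if_pos hX]
      · simp only [if_neg h1, Finset.sum_const_zero]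
    · by_cases h1 : s = s'
      · simp only [if_pos h1]
        rw [Finset.sum_tsub_distrib _ (fun p _ => by
            have h5 := hde hX p.1; have h6 := he1 p.1; omega)]
        rw [Finset.sum_const, Finset.card_univ, Fintype.card_fin, smul_eq_mul, mul_one]
        rw [Finset.sum_tsub_distrib _ (fun p _ => hde hX p.1), hSd, hSe, if_pos hX]
      · simp only [if_neg h1, Finset.sum_const_zero]
  · rw [if_neg hX]
    have hee : ∀ k, edef X Y (n+1) l k = 0 := by
      intro k
      unfold edef
      split
      · unfold ind; rw [if_neg (by tauto)]
      · rfl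
    have hpt : ∀ p : Fin (n+1),
        (if desXY X Y (fun i => ((insPerm σ' p i : Fin (n+1)) : ℕ) + 1) = s then 1 else 0)
        = (if s + 1 = s' then ddef X Y l p.1 else 0)
          + (if s = s' then 1 - ddef X Y l p.1 else 0) := by
      intro p
      have h1 := hkey p
      have h2 := hd1 p.1
      rw [hee p.1] at h1
      split_ifs <;> omega
    rw [Finset.sum_congr rfl (fun p _ => hpt p), Finset.sum_add_distrib]
    congr 1
    · by_cases h1 : s + 1 = s'
      · simp only [if_pos h1]; exact hSd
      · simp only [if_neg h1, Finset.sum_const_zero]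
    · by_cases h1 : s = s'
      · simp only [if_pos h1]
        rw [Finset.sum_tsub_distrib _ (fun p _ => hd1 p.1), hSd]
        rw [Finset.sum_const, Finset.card_univ, Fintype.card_fin, smul_eq_mul, mul_one]
      · simp only [if_neg h1, Finset.sum_const_zero]

lemma des_le_lY {X Y : Set ℕ} {n : ℕ} (hX : (n+1) ∈ X) (σ' : Equiv.Perm (Fin n)) :
    desXY X Y (fun i => ((σ' i : Fin n) : ℕ) + 1) ≤ lY Y n :=
  (cnt_formula X Y σ' 0 _ rfl).2 hX

lemma des_le_n {X Y : Set ℕ} {n : ℕ} (σ' : Equiv.Perm (Fin n)) :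
    desXY X Y (fun i => ((σ' i : Fin n) : ℕ) + 1) ≤ n := by
  rw [desXY]
  calc _ ≤ (Finset.univ : Finset (Fin n)).card := Finset.card_filter_le _ _
    _ = n := by simp

lemma lY_le {Y : Set ℕ} {n : ℕ} : lY Y n ≤ n := by
  rw [lY]
  calc _ ≤ (Finset.Icc 1 n).card := Finset.card_filter_le _ _
    _ = n := by rw [Nat.card_Icc]; omega

lemma permCount_rec (X Y : Set ℕ) (n s : ℕ) :
    permCount X Y (n+1) s =
      if (n+1) ∈ X then
        (if 1 ≤ s then (lY Y n - (s-1)) * permCount X Y n (s-1) else 0)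
          + ((n+1) - (lY Y n - s)) * permCount X Y n s
      else (s+1) * permCount X Y n (s+1) + ((n+1) - s) * permCount X Y n s := by
  rw [permCount_succ]
  rw [Finset.sum_congr rfl (fun σ' _ => (cnt_formula X Y σ' s _ rfl).1)]
  by_cases hX : (n+1) ∈ X
  · simp only [if_pos hX]
    rw [Finset.sum_add_distrib]
    congr 1
    · -- first piece
      by_cases hs : 1 ≤ s
      · rw [if_pos hs]
        have hpt : ∀ σ' : Equiv.Perm (Fin n),
            (if s = desXY X Y (fun i => ((σ' i : Fin n) : ℕ) + 1) + 1
              then lY Y n - desXY X Y (fun i => ((σ' i : Fin n) : ℕ) + 1) else 0)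
            = (if desXY X Y (fun i => ((σ' i : Fin n) : ℕ) + 1) = s - 1
              then lY Y n - (s-1) else 0) := by
          intro σ'
          by_cases hd : desXY X Y (fun i => ((σ' i : Fin n) : ℕ) + 1) = s - 1
          · rw [if_pos hd, if_pos (by omega), hd]
          · rw [if_neg (by omega), if_neg hd]
        rw [Finset.sum_congr rfl (fun σ' _ => hpt σ'), ← Finset.sum_filter,
          Finset.sum_const, smul_eq_mul, permCount, mul_comm]
      · rw [if_neg hs]
        rw [Finset.sum_eq_zero]
        intro σ' _
        rw [if_neg (by omega)]
    · have hpt : ∀ σ' : Equiv.Perm (Fin n),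
          (if s = desXY X Y (fun i => ((σ' i : Fin n) : ℕ) + 1)
            then (n+1) - (lY Y n - desXY X Y (fun i => ((σ' i : Fin n) : ℕ) + 1)) else 0)
          = (if desXY X Y (fun i => ((σ' i : Fin n) : ℕ) + 1) = s
            then (n+1) - (lY Y n - s) else 0) := by
        intro σ'
        by_cases hd : desXY X Y (fun i => ((σ' i : Fin n) : ℕ) + 1) = s
        · rw [if_pos (by omega), if_pos hd, hd]
        · rw [if_neg (by omega), if_neg hd]
      rw [Finset.sum_congr rfl (fun σ' _ => hpt σ'), ← Finset.sum_filter,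
        Finset.sum_const, smul_eq_mul, permCount, mul_comm]
  · simp only [if_neg hX]
    rw [Finset.sum_add_distrib]
    congr 1
    · have hpt : ∀ σ' : Equiv.Perm (Fin n),
          (if s + 1 = desXY X Y (fun i => ((σ' i : Fin n) : ℕ) + 1)
            then desXY X Y (fun i => ((σ' i : Fin n) : ℕ) + 1) else 0)
          = (if desXY X Y (fun i => ((σ' i : Fin n) : ℕ) + 1) = s + 1
            then s + 1 else 0) := by
        intro σ'
        by_cases hd : desXY X Y (fun i => ((σ' i : Fin n) : ℕ) + 1) = s + 1
        · rw [if_pos (by omega), if_pos hd, hd]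
        · rw [if_neg (by omega), if_neg hd]
      rw [Finset.sum_congr rfl (fun σ' _ => hpt σ'), ← Finset.sum_filter,
        Finset.sum_const, smul_eq_mul, permCount, mul_comm]
    · have hpt : ∀ σ' : Equiv.Perm (Fin n),
          (if s = desXY X Y (fun i => ((σ' i : Fin n) : ℕ) + 1)
            then (n+1) - desXY X Y (fun i => ((σ' i : Fin n) : ℕ) + 1) else 0)
          = (if desXY X Y (fun i => ((σ' i : Fin n) : ℕ) + 1) = s
            then (n+1) - s else 0) := by
        intro σ'
        by_cases hd : desXY X Y (fun i => ((σ' i : Fin n) : ℕ) + 1) = s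
        · rw [if_pos (by omega), if_pos hd, hd]
        · rw [if_neg (by omega), if_neg hd]
      rw [Finset.sum_congr rfl (fun σ' _ => hpt σ'), ← Finset.sum_filter,
        Finset.sum_const, smul_eq_mul, permCount, mul_comm]

lemma recX0_int {X Y : Set ℕ} {n : ℕ} (hX : (n+1) ∈ X) :
    (permCount X Y (n+1) 0 : ℤ) = ((n : ℤ) + 1 - lY Y n) * permCount X Y n 0 := by
  have h := permCount_rec X Y n 0
  rw [if_pos hX, if_neg (by omega), zero_add] at h
  rw [h]
  have h1 : lY Y n - 0 = lY Y n := rfl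
  rw [h1]
  have h2 : lY Y n ≤ n + 1 := le_trans lY_le (by omega)
  push_cast [Nat.cast_sub h2]
  ring

lemma recX_int {X Y : Set ℕ} {n : ℕ} (hX : (n+1) ∈ X) (s : ℕ) :
    (permCount X Y (n+1) (s+1) : ℤ)
      = ((n : ℤ) + 1 - lY Y n + (s+1)) * permCount X Y n (s+1)
        + ((lY Y n : ℤ) - s) * permCount X Y n s := by
  have h := permCount_rec X Y n (s+1)
  rw [if_pos hX, if_pos (by omega)] at h
  have hs1 : s + 1 - 1 = s := rfl
  rw [hs1] at h
  rw [h, Nat.cast_add, Nat.cast_mul, Nat.cast_mul, add_comm]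
  congr 1
  · -- ((n+1) - (lY - (s+1)) : ℕ) * P = (n+1-lY+(s+1)) * P
    by_cases hp : permCount X Y n (s+1) = 0
    · rw [hp]; push_cast; ring
    · have hle : s + 1 ≤ lY Y n := by
        obtain ⟨σ', hσ'⟩ := Finset.card_pos.mp (Nat.pos_of_ne_zero (by rw [permCount] at hp; exact hp))
        rw [Finset.mem_filter] at hσ'
        calc s + 1 = desXY X Y (fun i => ((σ' i : Fin n) : ℕ) + 1) := hσ'.2.symm
          _ ≤ lY Y n := des_le_lY hX σ'
      have hle2 : lY Y n - (s+1) ≤ n + 1 := le_trans (Nat.sub_le _ _) (le_trans lY_le (by omega))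
      rw [Nat.cast_sub hle2, Nat.cast_sub hle]
      push_cast
      ring
  · by_cases hp : permCount X Y n s = 0
    · rw [hp]; push_cast; ring
    · have hle : s ≤ lY Y n := by
        obtain ⟨σ', hσ'⟩ := Finset.card_pos.mp (Nat.pos_of_ne_zero (by rw [permCount] at hp; exact hp))
        rw [Finset.mem_filter] at hσ'
        calc s = desXY X Y (fun i => ((σ' i : Fin n) : ℕ) + 1) := hσ'.2.symm
          _ ≤ lY Y n := des_le_lY hX σ'
      rw [Nat.cast_sub hle]

lemma recNX_int {X Y : Set ℕ} {n : ℕ} (hX : (n+1) ∉ X) (s : ℕ) :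
    (permCount X Y (n+1) s : ℤ)
      = ((n : ℤ) + 1 - s) * permCount X Y n s + ((s : ℤ) + 1) * permCount X Y n (s+1) := by
  have h := permCount_rec X Y n s
  rw [if_neg hX] at h
  rw [h, Nat.cast_add, Nat.cast_mul, Nat.cast_mul, add_comm]
  congr 1
  · by_cases hp : permCount X Y n s = 0
    · rw [hp]; push_cast; ring
    · have hle : s ≤ n := by
        obtain ⟨σ', hσ'⟩ := Finset.card_pos.mp (Nat.pos_of_ne_zero (by rw [permCount] at hp; exact hp))
        rw [Finset.mem_filter] at hσ'
        calc s = desXY X Y (fun i => ((σ' i : Fin n) : ℕ) + 1) := hσ'.2.symm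
          _ ≤ n := des_le_n σ'
      rw [Nat.cast_sub (by omega)]
      push_cast
      ring


-- per-term identity, case (n+1) ∈ X
lemma termX (y A : ℤ) (n m s r : ℕ) (hsr : s - r = m + 1) (hsr2 : s - 1 - r = m)
    (hr : (r : ℤ) = (s : ℤ) - m - 1) :
    (-1:ℤ)^(s-r) * (Nat.choose (n+2) (s-r) : ℤ) * ((((n:ℤ)+1) - y + r) * A)
      = (((n:ℤ)+1) - y + s) * ((-1:ℤ)^(s-r) * (Nat.choose (n+1) (s-r) : ℤ) * A)
        + (y - s + 1) * ((-1:ℤ)^(s-1-r) * (Nat.choose (n+1) (s-1-r) : ℤ) * A) := by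
  rw [hsr, hsr2, hr]
  have f2 : (Nat.choose (n+2) (m+1) : ℤ)
      = (Nat.choose (n+1) m : ℤ) + (Nat.choose (n+1) (m+1) : ℤ) := by
    exact_mod_cast Nat.choose_succ_succ' (n+1) m
  have f3 : ((m:ℤ)+1) * (Nat.choose (n+2) (m+1) : ℤ)
      = ((n:ℤ)+2) * (Nat.choose (n+1) m : ℤ) := by
    have h : (n+2) * Nat.choose (n+1) m = Nat.choose (n+2) (m+1) * (m+1) :=
      Nat.add_one_mul_choose_eq (n+1) m
    have h' : (m+1) * Nat.choose (n+2) (m+1) = (n+2) * Nat.choose (n+1) m := by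
      rw [mul_comm]; exact h.symm
    exact_mod_cast h' 
  rw [f2] at f3 ⊢
  linear_combination ((-1:ℤ)^m * A) * f3

-- sum identity, case (n+1) ∈ X
lemma sumX_id (A : ℕ → ℤ) (y : ℤ) (n s : ℕ) :
    ∑ r ∈ range (s+1), (-1:ℤ)^(s-r) * (Nat.choose (n+2) (s-r) : ℤ) * ((((n:ℤ)+1) - y + r) * A r)
      = (((n:ℤ)+1) - y + s) *
          ∑ r ∈ range (s+1), (-1:ℤ)^(s-r) * (Nat.choose (n+1) (s-r) : ℤ) * A r
        + (y - s + 1) *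
          ∑ r ∈ range s, (-1:ℤ)^(s-1-r) * (Nat.choose (n+1) (s-1-r) : ℤ) * A r := by
  rw [Finset.sum_range_succ, Finset.sum_range_succ ((fun r => (-1:ℤ)^(s-r) * (Nat.choose (n+1) (s-r) : ℤ) * A r))]
  have hmain : ∑ r ∈ range s, (-1:ℤ)^(s-r) * (Nat.choose (n+2) (s-r) : ℤ) * ((((n:ℤ)+1) - y + r) * A r)
      = ∑ r ∈ range s, ((((n:ℤ)+1) - y + s) * ((-1:ℤ)^(s-r) * (Nat.choose (n+1) (s-r) : ℤ) * A r)
          + (y - s + 1) * ((-1:ℤ)^(s-1-r) * (Nat.choose (n+1) (s-1-r) : ℤ) * A r)) := by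
    refine Finset.sum_congr rfl fun r hr => ?_
    rw [Finset.mem_range] at hr
    exact termX y (A r) n (s-1-r) s r (by omega) rfl (by push_cast; omega)
  rw [hmain, Finset.sum_add_distrib, ← Finset.mul_sum, ← Finset.mul_sum]
  simp only [Nat.sub_self, pow_zero, Nat.choose_zero_right, Nat.cast_one]
  ring

-- (k+1) * C(k+r+1, r) = (r+1) * C(k+r+1, r+1)
lemma chooseShift (k r : ℕ) :
    ((k:ℤ)+1) * (Nat.choose (k+r+1) r : ℤ) = ((r:ℤ)+1) * (Nat.choose (k+r+1) (r+1) : ℤ) := by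
  have h : Nat.choose (k+r+1) (r+1) * (r+1) = Nat.choose (k+r+1) r * (k+r+1-r) :=
    Nat.choose_succ_right_eq (k+r+1) r
  have h2 : k+r+1-r = k+1 := by omega
  rw [h2] at h
  have h' : (k+1) * Nat.choose (k+r+1) r = (r+1) * Nat.choose (k+r+1) (r+1) := by
    rw [mul_comm ((r:ℕ)+1)]; rw [mul_comm]; exact h.symm
  exact_mod_cast h'

-- 0 = (n+1-s) C(n+1,s) - (s+1) C(n+1,s+1)  (as ℤ)
lemma chooseAbsorb (n s : ℕ) :
    (((n:ℤ)+1) - s) * (Nat.choose (n+1) s : ℤ) = ((s:ℤ)+1) * (Nat.choose (n+1) (s+1) : ℤ) := by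
  by_cases hs : s ≤ n + 1
  · have h : Nat.choose (n+1) (s+1) * (s+1) = Nat.choose (n+1) s * (n+1-s) :=
      Nat.choose_succ_right_eq (n+1) s
    have h' : (s+1) * Nat.choose (n+1) (s+1) = (n+1-s) * Nat.choose (n+1) s := by
      rw [mul_comm]; rw [h]; ring
    have := h'
    zify [hs] at this
    linarith
  · rw [Nat.choose_eq_zero_of_lt (by omega), Nat.choose_eq_zero_of_lt (by omega)]
    simp

-- per-term identity, case (n+1) ∉ X, r < s
lemma termNX (A : ℤ) (k n m s r : ℕ) (hsr : s - r = m + 1) (hr : (r : ℤ) = (s : ℤ) - m - 1) :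
    ((k:ℤ)+1) * ((-1:ℤ)^(s-r) * (Nat.choose (k+r+1) r : ℤ) * (Nat.choose (n+2) (s-r) : ℤ) * A)
      = (((n:ℤ)+1) - s) * ((-1:ℤ)^(s-(r+1)) * (Nat.choose (k+(r+1)) (r+1) : ℤ)
            * (Nat.choose (n+1) (s-(r+1)) : ℤ) * A)
        + ((s:ℤ)+1) * ((-1:ℤ)^(s+1-(r+1)) * (Nat.choose (k+(r+1)) (r+1) : ℤ)
            * (Nat.choose (n+1) (s+1-(r+1)) : ℤ) * A) := by
  have e1 : s - (r+1) = m := by omega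
  have e2 : s + 1 - (r+1) = m + 1 := by omega
  have e3 : k + (r+1) = k + r + 1 := by omega
  rw [e1, e2, e3, hsr]
  have f2 : (Nat.choose (n+2) (m+1) : ℤ)
      = (Nat.choose (n+1) m : ℤ) + (Nat.choose (n+1) (m+1) : ℤ) := by
    exact_mod_cast Nat.choose_succ_succ' (n+1) m
  have f3 : ((m:ℤ)+1) * (Nat.choose (n+2) (m+1) : ℤ)
      = ((n:ℤ)+2) * (Nat.choose (n+1) m : ℤ) := by
    have h : (n+2) * Nat.choose (n+1) m = Nat.choose (n+2) (m+1) * (m+1) :=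
      Nat.add_one_mul_choose_eq (n+1) m
    have h' : (m+1) * Nat.choose (n+2) (m+1) = (n+2) * Nat.choose (n+1) m := by
      rw [mul_comm]; exact h.symm
    exact_mod_cast h'
  rw [f2] at f3 ⊢
  have g1 := chooseShift k r
  rw [hr] at g1
  linear_combination ((-1:ℤ)^m * (Nat.choose (k+r+1) (r+1) : ℤ) * A) * f3
    - ((-1:ℤ)^m * ((Nat.choose (n+1) m : ℤ) + (Nat.choose (n+1) (m+1) : ℤ)) * A) * g1

-- sum identity, case (n+1) ∉ X
lemma sumNX_id (A : ℕ → ℤ) (k n s : ℕ) :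
    ((k:ℤ)+1) * ∑ r ∈ range (s+1),
        (-1:ℤ)^(s-r) * (Nat.choose (k+r+1) r : ℤ) * (Nat.choose (n+2) (s-r) : ℤ) * A (r+1)
      = (((n:ℤ)+1) - s) * ∑ r ∈ range (s+1),
          (-1:ℤ)^(s-r) * (Nat.choose (k+r) r : ℤ) * (Nat.choose (n+1) (s-r) : ℤ) * A r
        + ((s:ℤ)+1) * ∑ r ∈ range (s+2),
          (-1:ℤ)^(s+1-r) * (Nat.choose (k+r) r : ℤ) * (Nat.choose (n+1) (s+1-r) : ℤ) * A r := by
  set L : ℕ → ℤ := fun r => (-1:ℤ)^(s-r) * (Nat.choose (k+r+1) r : ℤ) * (Nat.choose (n+2) (s-r) : ℤ) * A (r+1) with hLdef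
  set A1 : ℕ → ℤ := fun r => (-1:ℤ)^(s-r) * (Nat.choose (k+r) r : ℤ) * (Nat.choose (n+1) (s-r) : ℤ) * A r with hA1def
  set B : ℕ → ℤ := fun r => (-1:ℤ)^(s+1-r) * (Nat.choose (k+r) r : ℤ) * (Nat.choose (n+1) (s+1-r) : ℤ) * A r with hBdef
  have hsum : ((k:ℤ)+1) * ∑ r ∈ range s, L r
      = (((n:ℤ)+1) - s) * ∑ r ∈ range s, A1 (r+1) + ((s:ℤ)+1) * ∑ r ∈ range s, B (r+1) := by
    rw [Finset.mul_sum, Finset.mul_sum, Finset.mul_sum, ← Finset.sum_add_distrib]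
    refine Finset.sum_congr rfl fun r hr => ?_
    rw [Finset.mem_range] at hr
    exact termNX (A (r+1)) k n (s-r-1) s r (by omega) (by omega)
  have hii : ((k:ℤ)+1) * L s = ((s:ℤ)+1) * B (s+1) := by
    rw [hLdef, hBdef]
    simp only [Nat.sub_self, pow_zero, Nat.choose_zero_right, Nat.cast_one]
    have e : k + (s+1) = k + s + 1 := rfl
    rw [e]
    linear_combination (A (s+1)) * chooseShift k s
  have hiii : 0 = (((n:ℤ)+1) - s) * A1 0 + ((s:ℤ)+1) * B 0 := by
    rw [hA1def, hBdef]
    simp only [Nat.sub_zero, Nat.add_zero, Nat.choose_zero_right, Nat.cast_one, pow_succ]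
    linear_combination (-(-1:ℤ)^s * A 0) * chooseAbsorb n s
  rw [Finset.sum_range_succ L, Finset.sum_range_succ' A1, Finset.sum_range_succ' B,
    Finset.sum_range_succ (fun r => B (r+1))]
  linear_combination hsum + hii + hiii

noncomputable def kcard (X : Set ℕ) (n : ℕ) : ℕ :=
  ((Finset.Icc 1 n).filter (fun x => x ∉ X)).card

noncomputable def prodX (X Y : Set ℕ) (n r : ℕ) : ℤ :=
  ∏ x ∈ (Finset.Icc 1 n).filter (fun x => x ∈ X),
    (1 + (r : ℤ) + (alphaSet X n x : ℤ) + (betaSet Y x : ℤ))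

noncomputable def RHSf (X Y : Set ℕ) (n s : ℕ) : ℤ :=
  (Nat.factorial (kcard X n) : ℤ) *
    ∑ r ∈ Finset.range (s+1), (-1:ℤ)^(s-r) * (Nat.choose (kcard X n + r) r : ℤ)
      * (Nat.choose (n+1) (s-r) : ℤ) * prodX X Y n r

lemma Icc_succ_insert (n : ℕ) : Finset.Icc 1 (n+1) = insert (n+1) (Finset.Icc 1 n) := by
  ext z
  simp only [Finset.mem_Icc, Finset.mem_insert]
  omega

lemma not_mem_Icc_self (n : ℕ) : (n+1) ∉ Finset.Icc 1 n := by
  simp only [Finset.mem_Icc]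
  omega

lemma kcard_succ_mem {X : Set ℕ} {n : ℕ} (hX : (n+1) ∈ X) : kcard X (n+1) = kcard X n := by
  rw [kcard, kcard, Icc_succ_insert, Finset.filter_insert, if_neg (by simp [hX])]

lemma kcard_succ_notmem {X : Set ℕ} {n : ℕ} (hX : (n+1) ∉ X) :
    kcard X (n+1) = kcard X n + 1 := by
  rw [kcard, kcard, Icc_succ_insert, Finset.filter_insert, if_pos (by simp [hX])]
  rw [Finset.card_insert_of_notMem]
  intro hc
  exact not_mem_Icc_self n (Finset.mem_of_mem_filter _ hc)

lemma alpha_succ {X : Set ℕ} {n x : ℕ} (hx : x ≤ n) :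
    alphaSet X (n+1) x = alphaSet X n x + (if (n+1) ∈ X then 0 else 1) := by
  have hIoc : Finset.Ioc x (n+1) = insert (n+1) (Finset.Ioc x n) := by
    ext z
    simp only [Finset.mem_Ioc, Finset.mem_insert]
    omega
  rw [alphaSet, alphaSet, hIoc, Finset.filter_insert]
  by_cases hX : (n+1) ∈ X
  · rw [if_neg (by simp [hX]), if_pos hX, Nat.add_zero]
  · rw [if_pos (by simp [hX]), if_neg hX, Finset.card_insert_of_notMem]
    intro hc
    have := Finset.mem_of_mem_filter _ hc
    simp only [Finset.mem_Ioc] at this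
    omega

lemma alpha_self {X : Set ℕ} {n : ℕ} : alphaSet X (n+1) (n+1) = 0 := by
  rw [alphaSet, Finset.Ioc_self]
  simp

lemma beta_last {Y : Set ℕ} {n : ℕ} : (betaSet Y (n+1) : ℤ) = (n : ℤ) - lY Y n := by
  have h : betaSet Y (n+1) + lY Y n = n := by
    rw [betaSet, lY, Finset.Ico_add_one_right_eq_Icc]
    have := Finset.card_filter_add_card_filter_not
      (s := Finset.Icc 1 n) (p := fun v => v ∈ Y)
    rw [Nat.card_Icc] at this
    omega
  have := congrArg (fun z : ℕ => (z : ℤ)) h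
  push_cast at this
  linarith

lemma prodX_succ_mem {X Y : Set ℕ} {n : ℕ} (hX : (n+1) ∈ X) (r : ℕ) :
    prodX X Y (n+1) r = (((n:ℤ)+1) - lY Y n + r) * prodX X Y n r := by
  rw [prodX, prodX, Icc_succ_insert, Finset.filter_insert, if_pos hX]
  rw [Finset.prod_insert (fun hc => not_mem_Icc_self n (Finset.mem_of_mem_filter _ hc))]
  have h1 : (1 + (r:ℤ) + (alphaSet X (n+1) (n+1) : ℤ) + (betaSet Y (n+1) : ℤ))
      = (((n:ℤ)+1) - lY Y n + r) := by
    rw [alpha_self, beta_last]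
    push_cast
    ring
  rw [h1]
  congr 1
  refine Finset.prod_congr rfl fun x hx => ?_
  have hxle : x ≤ n := (Finset.mem_Icc.mp (Finset.mem_of_mem_filter _ hx)).2
  rw [alpha_succ hxle, if_pos hX, Nat.add_zero]

lemma prodX_succ_notmem {X Y : Set ℕ} {n : ℕ} (hX : (n+1) ∉ X) (r : ℕ) :
    prodX X Y (n+1) r = prodX X Y n (r+1) := by
  rw [prodX, prodX, Icc_succ_insert, Finset.filter_insert, if_neg hX]
  refine Finset.prod_congr rfl fun x hx => ?_
  have hxle : x ≤ n := (Finset.mem_Icc.mp (Finset.mem_of_mem_filter _ hx)).2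
  rw [alpha_succ hxle, if_neg hX]
  push_cast
  ring

lemma permCount_zero (X Y : Set ℕ) (s : ℕ) :
    permCount X Y 0 s = if s = 0 then 1 else 0 := by
  rw [permCount]
  have hd : ∀ σ : Equiv.Perm (Fin 0), desXY X Y (fun i => ((σ i : Fin 0) : ℕ) + 1) = 0 := by
    intro σ
    rw [desXY]
    simp
  by_cases hs : s = 0
  · subst hs
    rw [if_pos rfl, Finset.filter_true_of_mem (fun σ _ => hd σ), Finset.card_univ]
    simp [Fintype.card_perm]
  · rw [if_neg hs, Finset.filter_false_of_mem, Finset.card_empty]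
    intro σ _
    rw [hd σ]
    omega

lemma RHSf_zero (X Y : Set ℕ) (s : ℕ) : RHSf X Y 0 s = if s = 0 then 1 else 0 := by
  have hk : kcard X 0 = 0 := by
    rw [kcard]
    have : Finset.Icc 1 0 = ∅ := by
      apply Finset.Icc_eq_empty
      omega
    rw [this]
    simp
  have hp : ∀ r, prodX X Y 0 r = 1 := by
    intro r
    rw [prodX]
    have : Finset.Icc 1 0 = ∅ := by
      apply Finset.Icc_eq_empty
      omega
    rw [this]
    simp
  rw [RHSf, hk]
  simp only [hp, Nat.factorial_zero, Nat.cast_one, one_mul, mul_one, Nat.zero_add,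
    Nat.choose_self, Nat.cast_one]
  cases s with
  | zero => simp
  | succ t =>
    rw [if_neg (by omega)]
    rw [Finset.sum_range_succ, Finset.sum_range_succ]
    have h1 : ∑ r ∈ Finset.range t, (-1:ℤ)^(t+1-r) * (Nat.choose 1 (t+1-r) : ℤ) = 0 := by
      refine Finset.sum_eq_zero fun r hr => ?_
      rw [Finset.mem_range] at hr
      rw [Nat.choose_eq_zero_of_lt (by omega : 1 < t+1-r)]
      simp
    rw [h1]
    have h2 : t+1-t = 1 := by omega
    have h3 : t+1-(t+1) = 0 := by omega
    rw [h2, h3]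
    simp [Nat.choose_self]

lemma master (X Y : Set ℕ) : ∀ n s : ℕ, (permCount X Y n s : ℤ) = RHSf X Y n s := by
  intro n
  induction n with
  | zero =>
    intro s
    rw [permCount_zero, RHSf_zero]
    split <;> simp
  | succ n ih =>
    have hstep_mem : (n+1) ∈ X → ∀ s : ℕ, RHSf X Y (n+1) s
        = (((n:ℤ)+1) - lY Y n + s) * RHSf X Y n s
          + ((lY Y n : ℤ) - s + 1) * ((Nat.factorial (kcard X n) : ℤ) *
            ∑ r ∈ Finset.range s, (-1:ℤ)^(s-1-r) * (Nat.choose (n+1) (s-1-r) : ℤ)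
              * ((Nat.choose (kcard X n + r) r : ℤ) * prodX X Y n r)) := by
      intro hX s
      rw [RHSf, kcard_succ_mem hX]
      have hsummand : ∀ r ∈ Finset.range (s+1),
          (-1:ℤ)^(s-r) * (Nat.choose (kcard X n + r) r : ℤ)
            * (Nat.choose (n+1+1) (s-r) : ℤ) * prodX X Y (n+1) r
          = (-1:ℤ)^(s-r) * (Nat.choose (n+2) (s-r) : ℤ)
            * ((((n:ℤ)+1) - (lY Y n : ℤ) + r)
               * ((Nat.choose (kcard X n + r) r : ℤ) * prodX X Y n r)) := by
        intro r _
        rw [prodX_succ_mem hX]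
        ring
      rw [Finset.sum_congr rfl hsummand]
      rw [sumX_id (fun r => (Nat.choose (kcard X n + r) r : ℤ) * prodX X Y n r) (lY Y n) n s]
      rw [RHSf]
      have hs1 : ∀ r ∈ Finset.range (s+1),
          (-1:ℤ)^(s-r) * (Nat.choose (n+1) (s-r) : ℤ)
            * ((Nat.choose (kcard X n + r) r : ℤ) * prodX X Y n r)
          = (-1:ℤ)^(s-r) * (Nat.choose (kcard X n + r) r : ℤ)
            * (Nat.choose (n+1) (s-r) : ℤ) * prodX X Y n r := by
        intro r _
        ring
      rw [Finset.sum_congr rfl hs1]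
      ring
    have hstep_tail : ∀ t : ℕ, (Nat.factorial (kcard X n) : ℤ) *
        ∑ r ∈ Finset.range (t+1), (-1:ℤ)^(t+1-1-r) * (Nat.choose (n+1) (t+1-1-r) : ℤ)
          * ((Nat.choose (kcard X n + r) r : ℤ) * prodX X Y n r) = RHSf X Y n t := by
      intro t
      rw [RHSf]
      congr 1
      refine Finset.sum_congr rfl fun r _ => ?_
      have : t+1-1-r = t-r := by omega
      rw [this]
      ring
    intro s
    by_cases hX : (n+1) ∈ X
    · cases s with
      | zero =>
        rw [recX0_int hX, ih 0, hstep_mem hX 0]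
        simp only [Finset.range_zero, Finset.sum_empty, mul_zero, add_zero, Nat.cast_zero]
      | succ t =>
        rw [recX_int hX t, ih (t+1), ih t, hstep_mem hX (t+1), hstep_tail t]
        push_cast
        ring
    · -- (n+1) ∉ X
      have hsummand : ∀ r ∈ Finset.range (s+1),
          (-1:ℤ)^(s-r) * (Nat.choose (kcard X n + 1 + r) r : ℤ)
            * (Nat.choose (n+1+1) (s-r) : ℤ) * prodX X Y (n+1) r
          = (-1:ℤ)^(s-r) * (Nat.choose (kcard X n + r + 1) r : ℤ)
            * (Nat.choose (n+2) (s-r) : ℤ) * prodX X Y n (r+1) := by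
        intro r _
        rw [prodX_succ_notmem hX]
        have h5 : kcard X n + 1 + r = kcard X n + r + 1 := by omega
        rw [h5]
      have hfact : (Nat.factorial (kcard X n + 1) : ℤ)
          = ((kcard X n : ℤ) + 1) * (Nat.factorial (kcard X n) : ℤ) := by
        rw [Nat.factorial_succ]
        push_cast
        ring
      have hR : RHSf X Y (n+1) s
          = (((n:ℤ)+1) - s) * RHSf X Y n s + ((s:ℤ)+1) * RHSf X Y n (s+1) := by
        rw [RHSf, kcard_succ_notmem hX]
        rw [Finset.sum_congr rfl hsummand]
        rw [hfact, mul_comm ((kcard X n : ℤ) + 1) _, mul_assoc]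
        rw [sumNX_id (prodX X Y n) (kcard X n) n s]
        simp only [RHSf]
        ring
      rw [recNX_int hX s, ih s, ih (s+1), hR]

theorem stmt0 (X Y : Set ℕ) (n s : ℕ) (hn : 1 ≤ n) :
    (permCount X Y n s : ℤ) =
      (Nat.factorial (((Finset.Icc 1 n).filter (fun x => x ∉ X)).card) : ℤ) *
        ∑ r ∈ Finset.range (s + 1),
          (-1) ^ (s - r) *
            (Nat.choose ((((Finset.Icc 1 n).filter (fun x => x ∉ X)).card) + r) r : ℤ) *
            (Nat.choose (n + 1) (s - r) : ℤ) *
            ∏ x ∈ (Finset.Icc 1 n).filter (fun x => x ∈ X),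
              (1 + (r : ℤ) + (alphaSet X n x : ℤ) + (betaSet Y x : ℤ)) := by
  have h := master X Y n s
  rw [h]
  rfl
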